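/- arXiv:2506.23953 — 2 statements merged into one kernel-verified Lean document; each statement's English description precedes it below -/
import Mathlib

section
/- The creation and annihilation operators a_i^± (i = 1,…,m+n) satisfy the triple relations: (i) ⟦a_i^ξ, a_j^ξ⟧ = 0 for ξ = ± and all i,j; (ii) ⟦⟦a_i^+, a_j^-⟧, a_k^+⟧ = δ_{jk} a_i^+ + (−1)^{d_i·d_i} δ_{ij} a_k^+ for all i,j,k; (iii) ⟦⟦a_i^+, a_j^-⟧, a_k^-⟧ = −(−1)^{(d_i+d_j)·d_k} δ_{ik} a_j^- − (−1)^{d_i·d_i} δ_{ij} a_k^- for all i,j,k ∈ {1,…,m+n}. -/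
/-- Degrees in `ℤ₂ × ℤ₂`. -/
abbrev Deg := ZMod 2 × ZMod 2

/-- The dot product `a·b = a₁b₁ + a₂b₂ ∈ ℤ₂`. -/
def dot (a b : Deg) : ZMod 2 := a.1 * b.1 + a.2 * b.2

/-- The sign `(−1)^{a·b}`. -/
noncomputable def sgn (a b : Deg) : ℂ := (-1 : ℂ) ^ (dot a b).val

/-- `(m+n+1) × (m+n+1)` complex matrices, `m = m₁+m₂`, `n = n₁+n₂`. -/
abbrev Mat (m₁ m₂ n₁ n₂ : ℕ) := Matrix (Fin (m₁+m₂+n₁+n₂+1)) (Fin (m₁+m₂+n₁+n₂+1)) ℂ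

/-- The degree `d_i` of a row/column index. -/
def d {m₁ m₂ n₁ n₂ : ℕ} (i : Fin (m₁+m₂+n₁+n₂+1)) : Deg :=
  if i.val ≤ m₁ then (0, 0)
  else if i.val ≤ m₁ + m₂ then (1, 1)
  else if i.val ≤ m₁ + m₂ + n₁ then (1, 0)
  else (0, 1)

/-- A matrix is homogeneous of degree `a` if `M i j = 0` whenever `d i + d j ≠ a`. -/
def IsHomog {m₁ m₂ n₁ n₂ : ℕ} (a : Deg) (M : Mat m₁ m₂ n₁ n₂) : Prop :=
  ∀ i j, d i + d j ≠ a → M i j = 0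

/-- The bracket `⟦M,N⟧ = MN − (−1)^{a·b} NM` of homogeneous matrices of degrees `a`, `b`. -/
noncomputable def bb {m₁ m₂ n₁ n₂ : ℕ} (a b : Deg) (M N : Mat m₁ m₂ n₁ n₂) : Mat m₁ m₂ n₁ n₂ :=
  M * N - sgn a b • (N * M)

/-- The graded supertrace. -/
noncomputable def Str {m₁ m₂ n₁ n₂ : ℕ} (M : Mat m₁ m₂ n₁ n₂) : ℂ :=
  ∑ i, if i.val ≤ m₁ + m₂ then M i i else - M i i

/-- The matrix unit `e_{ij}`. -/
noncomputable def e {m₁ m₂ n₁ n₂ : ℕ} (i j : Fin (m₁+m₂+n₁+n₂+1)) : Mat m₁ m₂ n₁ n₂ :=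
  Matrix.single i j 1


section aux
variable {m₁ m₂ n₁ n₂ : ℕ}

lemma e_mul_same (i j k : Fin (m₁+m₂+n₁+n₂+1)) :
    (e i j : Mat m₁ m₂ n₁ n₂) * e j k = e i k := by
  simp [e, Matrix.single_mul_single_same]

lemma e_mul_ne {j k : Fin (m₁+m₂+n₁+n₂+1)} (h : j ≠ k) (i l : Fin (m₁+m₂+n₁+n₂+1)) :
    (e i j : Mat m₁ m₂ n₁ n₂) * e k l = 0 := by
  simpa [e] using Matrix.single_mul_single_of_ne (c := (1 : ℂ)) i j k h 1

lemma deg_add_self (a : Deg) : a + a = 0 := by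
  ext <;> simp [CharTwo.add_self_eq_zero]

lemma sgn_zero_left (b : Deg) : sgn 0 b = 1 := by
  simp [sgn, dot]

end aux

theorem triple_relations (m₁ m₂ n₁ n₂ : ℕ)
    (i j k : Fin (m₁+m₂+n₁+n₂+1)) (hi : i ≠ 0) (hj : j ≠ 0) (hk : k ≠ 0) :
    (bb (d i) (d j) (e i 0) (e j 0) = (0 : Mat m₁ m₂ n₁ n₂) ∧
     bb (d i) (d j) (e 0 i) (e 0 j) = (0 : Mat m₁ m₂ n₁ n₂)) ∧
    bb (d i + d j) (d k) (bb (d i) (d j) (e i 0) (e 0 j)) (e k 0) =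
      (if j = k then (1 : ℂ) else 0) • e i 0 +
        sgn (d i) (d i) • ((if i = j then (1 : ℂ) else 0) • (e k 0 : Mat m₁ m₂ n₁ n₂)) ∧
    bb (d i + d j) (d k) (bb (d i) (d j) (e i 0) (e 0 j)) (e 0 k) =
      -(sgn (d i + d j) (d k) • ((if i = k then (1 : ℂ) else 0) • e 0 j)) -
        sgn (d i) (d i) • ((if i = j then (1 : ℂ) else 0) • (e 0 k : Mat m₁ m₂ n₁ n₂)) := by
  have h0i : (0 : Fin (m₁+m₂+n₁+n₂+1)) ≠ i := hi.symm
  have h0j : (0 : Fin (m₁+m₂+n₁+n₂+1)) ≠ j := hj.symm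
  have h0k : (0 : Fin (m₁+m₂+n₁+n₂+1)) ≠ k := hk.symm
  refine ⟨⟨?_, ?_⟩, ?_, ?_⟩
  · simp [bb, e_mul_ne h0j, e_mul_ne h0i]
  · simp [bb, e_mul_ne hi, e_mul_ne hj]
  · by_cases hij : i = j
    · subst hij
      by_cases hik : i = k
      · subst hik
        simp [bb, e_mul_same, e_mul_ne h0i, e_mul_ne hi, deg_add_self, sgn_zero_left,
          mul_sub, sub_mul, smul_sub, smul_smul]
        try abel
      · simp [bb, e_mul_same, e_mul_ne h0i, e_mul_ne hik, e_mul_ne h0k,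
          deg_add_self, sgn_zero_left, mul_sub, sub_mul, smul_sub, smul_smul, hik]
        try abel
    · by_cases hjk : j = k
      · subst hjk
        simp [bb, e_mul_same, e_mul_ne h0i, e_mul_ne hj, e_mul_ne (Ne.symm hij), hij,
          mul_sub, sub_mul, smul_sub, smul_smul]
      · simp [bb, e_mul_same, e_mul_ne h0i, e_mul_ne hj, e_mul_ne (Ne.symm hij),
          e_mul_ne hjk, hij, hjk, mul_sub, sub_mul, smul_sub, smul_smul]
  · by_cases hij : i = j
    · subst hij
      by_cases hik : i = k
      · subst hik
        simp [bb, e_mul_same, e_mul_ne h0i, e_mul_ne hi, deg_add_self, sgn_zero_left,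
          mul_sub, sub_mul, smul_sub, smul_smul]
        abel
      · simp [bb, e_mul_same, e_mul_ne h0i, e_mul_ne hi, e_mul_ne (Ne.symm hik),
          e_mul_ne hk, deg_add_self, sgn_zero_left, mul_sub, sub_mul, smul_sub,
          smul_smul, hik]
    · by_cases hik : i = k
      · subst hik
        simp [bb, e_mul_same, e_mul_ne h0i, e_mul_ne hi, e_mul_ne (Ne.symm hij), hij,
          e_mul_ne hj, mul_sub, sub_mul, smul_sub, smul_smul]
      · simp [bb, e_mul_same, e_mul_ne h0i, e_mul_ne hi, e_mul_ne (Ne.symm hij), hij, hik,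
          e_mul_ne hj, e_mul_ne (Ne.symm hik), mul_sub, sub_mul, smul_sub, smul_smul]
end

section
/- The smallest complex subspace of N×N matrices that contains all the elements a_i^+ = e_{i0} and a_i^- = e_{0i} (i = 1,…,m+n) and is closed under the bracket ⟦·,·⟧ of homogeneous elements is exactly sl(m₁+1,m₂|n₁,n₂), the space of supertraceless matrices. In other words, the a_i^± generate sl(m₁+1,m₂|n₁,n₂). -/
-- auxiliary development
noncomputable def tau (a : Deg) : ℂ := (-1 : ℂ) ^ (a.1 + a.2).val

lemma zmod2_cases (x : ZMod 2) : x = 0 ∨ x = 1 := by revert x; decide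

lemma neg_one_pow_zmod (x y : ZMod 2) :
    (-1 : ℂ) ^ ((x + y).val) = (-1 : ℂ) ^ x.val * (-1 : ℂ) ^ y.val := by
  rcases zmod2_cases x with rfl | rfl <;> rcases zmod2_cases y with rfl | rfl <;>
    norm_num [show ((0:ZMod 2)).val = 0 from rfl, show ((1:ZMod 2)).val = 1 from rfl,
      show ((1:ZMod 2)+1) = 0 from rfl, show (ZMod.val (2:ZMod 2)) = 0 from rfl]

lemma tau_add (a b : Deg) : tau (a + b) = tau a * tau b := by
  have : (a + b).1 + (a + b).2 = (a.1 + a.2) + (b.1 + b.2) := by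
    simp [Prod.fst, Prod.snd]; ring
  rw [tau, this, neg_one_pow_zmod]; rfl

lemma tau_sq (a : Deg) : tau a * tau a = 1 := by
  rw [tau, ← pow_add, ← two_mul, pow_mul]; norm_num

lemma sgn_self (a : Deg) : sgn a a = tau a := by
  have : dot a a = a.1 + a.2 := by
    unfold dot
    rcases zmod2_cases a.1 with h1 | h1 <;> rcases zmod2_cases a.2 with h2 | h2 <;>
      rw [h1, h2] <;> decide
  rw [sgn, this, tau]

section
variable {m₁ m₂ n₁ n₂ : ℕ}

lemma d_zero : (d (0 : Fin (m₁+m₂+n₁+n₂+1))) = ((0,0) : Deg) := by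
  simp [d]

lemma sigma_eq (i : Fin (m₁+m₂+n₁+n₂+1)) :
    (if i.val ≤ m₁ + m₂ then (1:ℂ) else -1) = tau (d i) := by
  unfold d
  split_ifs with h1 h2 h3 h4 h5 <;>
    simp_all [tau, show (ZMod.val (0:ZMod 2)) = 0 from rfl, show (ZMod.val (1:ZMod 2)) = 1 from rfl,
      show ((1:ZMod 2)+1) = 0 from rfl, show ((1:ZMod 2)+0) = 1 from rfl,
      show ((0:ZMod 2)+1) = 1 from rfl, show ((0:ZMod 2)+0) = 0 from rfl,
      show (ZMod.val (2:ZMod 2)) = 0 from rfl] <;>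
    omega

lemma Str_eq (M : Mat m₁ m₂ n₁ n₂) : Str M = ∑ i, tau (d i) * M i i := by
  unfold Str
  refine Finset.sum_congr rfl fun i _ => ?_
  rw [← sigma_eq]; split_ifs <;> ring

end

section
variable {m₁ m₂ n₁ n₂ : ℕ}

lemma homog_e (i j : Fin (m₁+m₂+n₁+n₂+1)) : IsHomog (m₁ := m₁) (d i + d j) (e i j) := by
  intro k l h
  by_cases hk : i = k ∧ j = l
  · exact absurd (by rw [← hk.1, ← hk.2]) h
  · simp [e, Matrix.single, hk]

lemma homog_e_left (i : Fin (m₁+m₂+n₁+n₂+1)) : IsHomog (m₁ := m₁) (d i) (e i 0) := by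
  have := homog_e (m₁ := m₁) (m₂ := m₂) (n₁ := n₁) (n₂ := n₂) i 0
  rwa [d_zero, show ((0,0) : Deg) = 0 from rfl, add_zero] at this

lemma homog_e_right (i : Fin (m₁+m₂+n₁+n₂+1)) : IsHomog (m₁ := m₁) (d i) (e 0 i) := by
  have := homog_e (m₁ := m₁) (m₂ := m₂) (n₁ := n₁) (n₂ := n₂) 0 i
  rwa [d_zero, show ((0,0) : Deg) = 0 from rfl, zero_add] at this

lemma bb_e_ne (i j : Fin (m₁+m₂+n₁+n₂+1)) (hij : i ≠ j) :
    bb (m₁ := m₁) (d i) (d j) (e i 0) (e 0 j) = e i j := by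
  unfold bb e
  rw [Matrix.single_mul_single_same]
  have hz : (Matrix.single (0 : Fin (m₁+m₂+n₁+n₂+1)) j (1:ℂ)) *
      Matrix.single i 0 1 = 0 := Matrix.single_mul_single_of_ne (c := (1:ℂ)) _ _ _ (Ne.symm hij) 1
  rw [hz]
  simp

lemma bb_e_diag (i : Fin (m₁+m₂+n₁+n₂+1)) :
    bb (m₁ := m₁) (d i) (d i) (e i 0) (e 0 i) = e i i - tau (d i) • e 0 0 := by
  unfold bb e
  rw [Matrix.single_mul_single_same, Matrix.single_mul_single_same, sgn_self]
  norm_num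

lemma Str_add (A B : Mat m₁ m₂ n₁ n₂) : Str (A + B) = Str A + Str B := by
  simp only [Str_eq, Matrix.add_apply, mul_add, Finset.sum_add_distrib]

lemma Str_sub (A B : Mat m₁ m₂ n₁ n₂) : Str (A - B) = Str A - Str B := by
  simp only [Str_eq, Matrix.sub_apply, mul_sub, Finset.sum_sub_distrib]

lemma Str_smul (c : ℂ) (A : Mat m₁ m₂ n₁ n₂) : Str (c • A) = c * Str A := by
  simp only [Str_eq, Matrix.smul_apply, smul_eq_mul, Finset.mul_sum]
  exact Finset.sum_congr rfl fun i _ => by ring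

lemma Str_bb (a b : Deg) (X Y : Mat m₁ m₂ n₁ n₂) (hX : IsHomog a X) (hY : IsHomog b Y) :
    Str (bb a b X Y) = 0 := by
  unfold bb
  rw [Str_sub, Str_smul, sub_eq_zero]
  rw [Str_eq, Str_eq]
  simp only [Matrix.mul_apply, Finset.mul_sum]
  rw [Finset.sum_comm (f := fun i j => sgn a b * (tau (d i) * (Y i j * X j i)))]
  refine Finset.sum_congr rfl fun i _ => Finset.sum_congr rfl fun j _ => ?_
  by_cases hx : X i j = 0
  · rw [hx]; ring
  by_cases hy : Y j i = 0
  · rw [hy]; ring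
  have ha : d i + d j = a := by by_contra h; exact hx (hX i j h)
  have hb : d i + d j = b := by
    by_contra h; exact hy (hY j i (by rwa [add_comm]))
  rw [← ha, ← hb, sgn_self, tau_add]
  linear_combination (-(tau (d i) * X i j * Y j i)) * tau_sq (d j)

end

section
variable {m₁ m₂ n₁ n₂ : ℕ}

lemma tau_d_zero : tau (d (0 : Fin (m₁+m₂+n₁+n₂+1))) = 1 := by
  rw [d_zero]; norm_num [tau, show (((0:ZMod 2)+0)).val = 0 from rfl]

lemma Str_e_offdiag (i j : Fin (m₁+m₂+n₁+n₂+1)) (h : i ≠ j) :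
    Str (m₁ := m₁) (e i j) = 0 := by
  rw [Str_eq]
  refine Finset.sum_eq_zero fun k _ => ?_
  have hz : (e i j : Mat m₁ m₂ n₁ n₂) k k = 0 := by
    simp only [e, Matrix.single, Matrix.of_apply, ite_eq_right_iff, and_imp]
    rintro rfl rfl; exact absurd rfl h
  rw [hz, mul_zero]

lemma smul_e (M : Mat m₁ m₂ n₁ n₂) (i j : Fin (m₁+m₂+n₁+n₂+1)) :
    M i j • (e i j : Mat m₁ m₂ n₁ n₂) = Matrix.single i j (M i j) := by
  rw [e, Matrix.smul_single, smul_eq_mul, mul_one]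

lemma decomposition (M : Mat m₁ m₂ n₁ n₂) (hM : Str M = 0) :
    M = ∑ i, ∑ j, M i j •
      (if i = j then e i i - tau (d i) • e 0 0 else e i j : Mat m₁ m₂ n₁ n₂) := by
  have h1 : ∀ i j : Fin (m₁+m₂+n₁+n₂+1),
      M i j • (if i = j then e i i - tau (d i) • e 0 0 else e i j : Mat m₁ m₂ n₁ n₂)
      = M i j • e i j - (if i = j then tau (d i) * M i i else 0) • e 0 0 := by
    intro i j
    split_ifs with h
    · subst h
      rw [smul_sub, smul_smul, mul_comm]
    · simp
  simp_rw [h1, Finset.sum_sub_distrib, smul_e, ← Matrix.matrix_eq_sum_single,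
    ← Finset.sum_smul, Finset.sum_ite_eq, Finset.mem_univ, if_true, ← Str_eq, hM,
    zero_smul, sub_zero]

end

theorem generators_generate_sl (m₁ m₂ n₁ n₂ : ℕ) :
    ((sInf {V : Submodule ℂ (Mat m₁ m₂ n₁ n₂) |
        (∀ i : Fin (m₁+m₂+n₁+n₂+1), i ≠ 0 → e i 0 ∈ V ∧ e 0 i ∈ V) ∧
        (∀ (a b : Deg) (X Y : Mat m₁ m₂ n₁ n₂),
          X ∈ V → Y ∈ V → IsHomog a X → IsHomog b Y → bb a b X Y ∈ V)} :
      Submodule ℂ (Mat m₁ m₂ n₁ n₂)) : Set (Mat m₁ m₂ n₁ n₂)) =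
      {M : Mat m₁ m₂ n₁ n₂ | Str M = 0} := by
  ext M
  simp only [SetLike.mem_coe, Submodule.mem_sInf, Set.mem_setOf_eq]
  constructor
  · intro h
    set T : Submodule ℂ (Mat m₁ m₂ n₁ n₂) :=
      { carrier := {A | Str A = 0}
        add_mem' := fun {A B} hA hB => by
          simp only [Set.mem_setOf_eq] at *
          rw [Str_add, hA, hB, add_zero]
        zero_mem' := by
          simp only [Set.mem_setOf_eq, Str_eq]
          simp
        smul_mem' := fun c {A} hA => by
          simp only [Set.mem_setOf_eq] at *
          rw [Str_smul, hA, mul_zero] } with hT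
    have hTmem : M ∈ T := by
      refine h T ⟨fun i hi => ⟨?_, ?_⟩, fun a b X Y _ _ hXh hYh => ?_⟩
      · exact Str_e_offdiag i 0 hi
      · exact Str_e_offdiag 0 i (Ne.symm hi)
      · exact Str_bb a b X Y hXh hYh
    exact hTmem
  · intro hM V hV
    obtain ⟨hgen, hbr⟩ := hV
    have hoff : ∀ i j : Fin (m₁+m₂+n₁+n₂+1), i ≠ j → (e i j : Mat m₁ m₂ n₁ n₂) ∈ V := by
      intro i j hij
      by_cases hi : i = 0
      · subst hi; exact (hgen j (Ne.symm hij)).2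
      by_cases hj : j = 0
      · subst hj; exact (hgen i hi).1
      · have := hbr (d i) (d j) (e i 0) (e 0 j) (hgen i hi).1 (hgen j hj).2
          (homog_e_left i) (homog_e_right j)
        rwa [bb_e_ne i j hij] at this
    have hB : ∀ i j : Fin (m₁+m₂+n₁+n₂+1),
        (if i = j then e i i - tau (d i) • e 0 0 else e i j : Mat m₁ m₂ n₁ n₂) ∈ V := by
      intro i j
      split_ifs with h
      · subst h
        by_cases hi : i = 0
        · subst hi
          rw [tau_d_zero, one_smul, sub_self]
          exact V.zero_mem
        · have := hbr (d i) (d i) (e i 0) (e 0 i) (hgen i hi).1 (hgen i hi).2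
            (homog_e_left i) (homog_e_right i)
          rwa [bb_e_diag i] at this
      · exact hoff i j h
    rw [decomposition M hM]
    exact Submodule.sum_mem V fun i _ => Submodule.sum_mem V fun j _ =>
      V.smul_mem _ (hB i j)
end
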